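/- Let k ≥ 2, d ∈ {1,2,3}, m ∈ ℤ, and let N be an integer with N − k ≥ 2. There exists a homogeneous polynomial P of degree d in k variables with rational coefficients, depending only on N, k, d and m, such that for every L : ℤ → ℚ with L_j = 0 unless 0 ≤ j ≤ k−1, the constants produced by the downward iteration of the Fano recursion satisfy L^{N,d}_m = P(L_0, …, L_{k−1}) (for d = 1 one may take P = the coordinate L_m). Moreover the same conclusion holds for N = k+1, where the degree-1 constants are L^{k+1,1}_m := L_m − k! for 1 ≤ m ≤ k−2 and 0 otherwise, provided L is additionally required to satisfy L_0 = k! (so that L^{k+1,1}_m = L_m − L_0 is again homogeneous of degree 1 in L_0, …, L_{k−1}). -/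
import Mathlib


/-- Downward iteration of the degree-2 Fano recursion, as a function of the number of
steps `t = 2k − N` below the range `N ≥ 2k` where the constants vanish. -/
def iter2 (k : ℤ) (L : ℤ → ℚ) : ℕ → ℤ → ℚ
  | 0, _ => 0
  | t + 1, m =>
      (1/2) * (iter2 k L t (m - 1) + iter2 k L t m
        + 2 * L m * L (m + ((2 * k - ((t : ℤ) + 1)) - k)))

/-- Downward iteration of the degree-3 Fano recursion. -/
def iter3 (k : ℤ) (L : ℤ → ℚ) : ℕ → ℤ → ℚ
  | 0, _ => 0
  | t + 1, m =>
      (1/18) * (4 * iter3 k L t (m - 2) + 10 * iter3 k L t (m - 1) + 4 * iter3 k L t m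
        + 12 * iter2 k L t (m - 1) * L (m + 2 * ((2 * k - ((t : ℤ) + 1)) - k))
        + 9 * iter2 k L t m * L (m + 2 * ((2 * k - ((t : ℤ) + 1)) - k))
        + 6 * iter2 k L t m * L (m + 1 + 2 * ((2 * k - ((t : ℤ) + 1)) - k))
        + 6 * L (m - 1) * iter2 k L t (m - 1 + ((2 * k - ((t : ℤ) + 1)) - k))
        + 9 * L m * iter2 k L t (m - 1 + ((2 * k - ((t : ℤ) + 1)) - k))
        + 12 * L m * iter2 k L t (m + ((2 * k - ((t : ℤ) + 1)) - k))
        + 18 * L m * L (m + ((2 * k - ((t : ℤ) + 1)) - k))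
            * L (m + 2 * ((2 * k - ((t : ℤ) + 1)) - k)))

/-- The conic constants `L^{N,2}` obtained by downward iteration of the Fano recursion. -/
def LN2 (k : ℤ) (L : ℤ → ℚ) (N : ℤ) (m : ℤ) : ℚ := iter2 k L (2 * k - N).toNat m

/-- The cubic constants `L^{N,3}` obtained by downward iteration of the Fano recursion. -/
def LN3 (k : ℤ) (L : ℤ → ℚ) (N : ℤ) (m : ℤ) : ℚ := iter3 k L (2 * k - N).toNat m

/-- The family `(L^1 = L, L^2 = L^{N,2}, L^3 = L^{N,3})` of structural constants. -/
def famN (k : ℤ) (L : ℤ → ℚ) (N : ℤ) : ℕ → ℤ → ℚ :=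
  fun d m => if d = 1 then L m else if d = 2 then LN2 k L N m
    else if d = 3 then LN3 k L N m else 0


/-- The family of structural constants of the index-one hypersurface (`N = k + 1`):
the degree-1 constants are `L^{k+1,1}_m = L_m − k!` for `1 ≤ m ≤ k−2` and `0`
otherwise, while the degree-2 and degree-3 constants are given by the same downward
iteration of the Fano recursion. -/
def famIdx1 (k : ℕ) (L : ℤ → ℚ) : ℕ → ℤ → ℚ :=
  fun d m => if d = 1 then
      (if 1 ≤ m ∧ m ≤ (k : ℤ) - 2 then L m - (k.factorial : ℚ) else 0)
    else famN k L ((k : ℤ) + 1) d m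

open MvPolynomial in
/-- Polynomial version of `iter2`. -/
noncomputable def iter2P {n : ℕ} (k : ℤ) (Lp : ℤ → MvPolynomial (Fin n) ℚ) :
    ℕ → ℤ → MvPolynomial (Fin n) ℚ
  | 0, _ => 0
  | t + 1, m =>
      C (1/2 : ℚ) * (iter2P k Lp t (m - 1) + iter2P k Lp t m
        + C (2 : ℚ) * (Lp m * Lp (m + ((2 * k - ((t : ℤ) + 1)) - k))))

open MvPolynomial in
/-- Polynomial version of `iter3`. -/
noncomputable def iter3P {n : ℕ} (k : ℤ) (Lp : ℤ → MvPolynomial (Fin n) ℚ) :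
    ℕ → ℤ → MvPolynomial (Fin n) ℚ
  | 0, _ => 0
  | t + 1, m =>
      C (1/18 : ℚ) * (C (4:ℚ) * iter3P k Lp t (m - 2) + C (10:ℚ) * iter3P k Lp t (m - 1)
        + C (4:ℚ) * iter3P k Lp t m
        + C (12:ℚ) * (iter2P k Lp t (m - 1) * Lp (m + 2 * ((2 * k - ((t : ℤ) + 1)) - k)))
        + C (9:ℚ) * (iter2P k Lp t m * Lp (m + 2 * ((2 * k - ((t : ℤ) + 1)) - k)))
        + C (6:ℚ) * (iter2P k Lp t m * Lp (m + 1 + 2 * ((2 * k - ((t : ℤ) + 1)) - k)))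
        + C (6:ℚ) * (Lp (m - 1) * iter2P k Lp t (m - 1 + ((2 * k - ((t : ℤ) + 1)) - k)))
        + C (9:ℚ) * (Lp m * iter2P k Lp t (m - 1 + ((2 * k - ((t : ℤ) + 1)) - k)))
        + C (12:ℚ) * (Lp m * iter2P k Lp t (m + ((2 * k - ((t : ℤ) + 1)) - k)))
        + C (18:ℚ) * (Lp m * Lp (m + ((2 * k - ((t : ℤ) + 1)) - k))
            * Lp (m + 2 * ((2 * k - ((t : ℤ) + 1)) - k))))

lemma eval_iter2P {n : ℕ} (k : ℤ) (Lp : ℤ → MvPolynomial (Fin n) ℚ) (v : Fin n → ℚ) :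
    ∀ t m, MvPolynomial.eval v (iter2P k Lp t m)
      = iter2 k (fun j => MvPolynomial.eval v (Lp j)) t m
  | 0, m => by simp [iter2P, iter2]
  | t + 1, m => by
      simp only [iter2P, iter2, map_mul, map_add, MvPolynomial.eval_C,
        eval_iter2P k Lp v t]
      ring

lemma eval_iter3P {n : ℕ} (k : ℤ) (Lp : ℤ → MvPolynomial (Fin n) ℚ) (v : Fin n → ℚ) :
    ∀ t m, MvPolynomial.eval v (iter3P k Lp t m)
      = iter3 k (fun j => MvPolynomial.eval v (Lp j)) t m
  | 0, m => by simp [iter3P, iter3]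
  | t + 1, m => by
      simp only [iter3P, iter3, map_mul, map_add, MvPolynomial.eval_C,
        eval_iter2P k Lp v t, eval_iter3P k Lp v t]
      ring

lemma isHom_iter2P {n : ℕ} (k : ℤ) (Lp : ℤ → MvPolynomial (Fin n) ℚ)
    (h : ∀ j, (Lp j).IsHomogeneous 1) :
    ∀ t m, (iter2P k Lp t m).IsHomogeneous 2
  | 0, _ => MvPolynomial.isHomogeneous_zero _ _ _
  | t + 1, m => by
      exact ((((isHom_iter2P k Lp h t _).add (isHom_iter2P k Lp h t _)).add
        (((h _).mul (h _)).C_mul _)).C_mul _)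

lemma isHom_iter3P {n : ℕ} (k : ℤ) (Lp : ℤ → MvPolynomial (Fin n) ℚ)
    (h : ∀ j, (Lp j).IsHomogeneous 1) :
    ∀ t m, (iter3P k Lp t m).IsHomogeneous 3
  | 0, _ => MvPolynomial.isHomogeneous_zero _ _ _
  | t + 1, m => by
      have h2 := isHom_iter2P k Lp h t
      have h3a := isHom_iter3P k Lp h t (m - 2)
      have h3b := isHom_iter3P k Lp h t (m - 1)
      have h3c := isHom_iter3P k Lp h t m
      exact (((((((((((h3a.C_mul _).add (h3b.C_mul _)).add
        (h3c.C_mul _)).add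
        (((h2 _).mul (h _)).C_mul _)).add
        (((h2 _).mul (h _)).C_mul _)).add
        (((h2 _).mul (h _)).C_mul _)).add
        (((h _).mul (h2 _)).C_mul _)).add
        (((h _).mul (h2 _)).C_mul _)).add
        (((h _).mul (h2 _)).C_mul _)).add
        ((((h _).mul (h _)).mul (h _)).C_mul _)).C_mul _)

/-- Generic line-constant polynomials. -/
noncomputable def genL (k : ℕ) : ℤ → MvPolynomial (Fin k) ℚ :=
  fun j => if h : 0 ≤ j ∧ j ≤ (k : ℤ) - 1 then MvPolynomial.X ⟨j.toNat, by omega⟩ else 0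

lemma isHom_genL (k : ℕ) (j : ℤ) : (genL k j).IsHomogeneous 1 := by
  unfold genL
  split
  · exact MvPolynomial.isHomogeneous_X _ _
  · exact MvPolynomial.isHomogeneous_zero _ _ _

lemma eval_genL (k : ℕ) (L : ℤ → ℚ)
    (hL : ∀ j : ℤ, L j ≠ 0 → 0 ≤ j ∧ j ≤ (k : ℤ) - 1) (j : ℤ) :
    MvPolynomial.eval (fun i : Fin k => L ((i : ℕ) : ℤ)) (genL k j) = L j := by
  unfold genL
  split
  · next hj => simp [Int.toNat_of_nonneg hj.1]
  · next hj =>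
      by_contra h
      exact hj (hL j fun h0 => h (by simp [h0]))

/-- Combinatorial content of Corollary 3: for `d ≤ 3` the structure constants produced
by the downward iteration of the Fano recursion are homogeneous polynomials of degree
`d` in the line constants `L_0, …, L_{k−1}`, both for `N − k ≥ 2` and for the index-one
case `N = k + 1` (where the degree-1 constants are `L_m − k!` and one additionally
requires `L_0 = k!`, so that `L_m − k! = L_m − L_0` is again homogeneous of degree 1). -/
theorem structure_constants_polynomial (k : ℕ) (hk : 2 ≤ k) (d : ℕ)
    (hd : d = 1 ∨ d = 2 ∨ d = 3) (m : ℤ) (N : ℤ) (hN : 2 ≤ N - k) :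
    (∃ P : MvPolynomial (Fin k) ℚ, P.IsHomogeneous d ∧
      ∀ L : ℤ → ℚ, (∀ j : ℤ, L j ≠ 0 → 0 ≤ j ∧ j ≤ (k : ℤ) - 1) →
        famN k L N d m = MvPolynomial.eval (fun i : Fin k => L ((i : ℕ) : ℤ)) P)
    ∧ (∃ P : MvPolynomial (Fin k) ℚ, P.IsHomogeneous d ∧
      ∀ L : ℤ → ℚ, (∀ j : ℤ, L j ≠ 0 → 0 ≤ j ∧ j ≤ (k : ℤ) - 1) →
        L 0 = (k.factorial : ℚ) →
        famIdx1 k L d m = MvPolynomial.eval (fun i : Fin k => L ((i : ℕ) : ℤ)) P) := by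
  obtain hd | hd | hd := hd
  · subst hd
    constructor
    · by_cases hm : 0 ≤ m ∧ m ≤ (k : ℤ) - 1
      · refine ⟨MvPolynomial.X ⟨m.toNat, by omega⟩, MvPolynomial.isHomogeneous_X _ _, ?_⟩
        intro L hL
        simp [famN, Int.toNat_of_nonneg hm.1]
      · refine ⟨0, MvPolynomial.isHomogeneous_zero _ _ _, ?_⟩
        intro L hL
        have hz : L m = 0 := by by_contra h; exact hm (hL m h)
        simp [famN, hz]
    · by_cases hm : 1 ≤ m ∧ m ≤ (k : ℤ) - 2
      · refine ⟨MvPolynomial.X ⟨m.toNat, by omega⟩ - MvPolynomial.X ⟨0, by omega⟩,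
          (MvPolynomial.isHomogeneous_X _ _).sub (MvPolynomial.isHomogeneous_X _ _), ?_⟩
        intro L hL h0
        simp [famIdx1, hm.1, hm.2, Int.toNat_of_nonneg (by omega : (0:ℤ) ≤ m), h0]
      · refine ⟨0, MvPolynomial.isHomogeneous_zero _ _ _, ?_⟩
        intro L hL h0
        simp [famIdx1, hm]
  · subst hd
    have key : ∀ N' : ℤ, ∃ P : MvPolynomial (Fin k) ℚ, P.IsHomogeneous 2 ∧
        ∀ L : ℤ → ℚ, (∀ j : ℤ, L j ≠ 0 → 0 ≤ j ∧ j ≤ (k : ℤ) - 1) →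
          LN2 k L N' m = MvPolynomial.eval (fun i : Fin k => L ((i : ℕ) : ℤ)) P := by
      intro N'
      refine ⟨iter2P k (genL k) (2 * (k : ℤ) - N').toNat m,
        isHom_iter2P _ _ (isHom_genL k) _ _, fun L hL => ?_⟩
      rw [LN2, eval_iter2P]
      congr 1
      funext j
      exact (eval_genL k L hL j).symm
    constructor
    · obtain ⟨P, h1, h2⟩ := key N
      exact ⟨P, h1, fun L hL => by simpa [famN] using h2 L hL⟩
    · obtain ⟨P, h1, h2⟩ := key ((k : ℤ) + 1)
      exact ⟨P, h1, fun L hL _ => by simpa [famIdx1, famN] using h2 L hL⟩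
  · subst hd
    have key : ∀ N' : ℤ, ∃ P : MvPolynomial (Fin k) ℚ, P.IsHomogeneous 3 ∧
        ∀ L : ℤ → ℚ, (∀ j : ℤ, L j ≠ 0 → 0 ≤ j ∧ j ≤ (k : ℤ) - 1) →
          LN3 k L N' m = MvPolynomial.eval (fun i : Fin k => L ((i : ℕ) : ℤ)) P := by
      intro N'
      refine ⟨iter3P k (genL k) (2 * (k : ℤ) - N').toNat m,
        isHom_iter3P _ _ (isHom_genL k) _ _, fun L hL => ?_⟩
      rw [LN3, eval_iter3P]
      congr 1
      funext j
      exact (eval_genL k L hL j).symm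
    constructor
    · obtain ⟨P, h1, h2⟩ := key N
      exact ⟨P, h1, fun L hL => by simpa [famN] using h2 L hL⟩
    · obtain ⟨P, h1, h2⟩ := key ((k : ℤ) + 1)
      exact ⟨P, h1, fun L hL _ => by simpa [famIdx1, famN] using h2 L hL⟩
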